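/- Let ℓ ≥ 1 and let G be a K_{ℓ,ℓ}-free finite simple graph on n vertices. Then the number of edges of G is at most ((ℓ−1)/2)^{1/ℓ} · n^{2−1/ℓ} + (1/2)(ℓ−1)n. -/

import Mathlib

/-- `G` is `K_{ℓ,ℓ}`-free: there are no two disjoint sets of vertices `A, B` of size `ℓ`
with every vertex of `A` adjacent to every vertex of `B`. -/
def KllFree {V : Type*} [DecidableEq V] (G : SimpleGraph V) (ℓ : ℕ) : Prop :=
  ¬ ∃ A B : Finset V, Disjoint A B ∧ A.card = ℓ ∧ B.card = ℓ ∧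
      ∀ a ∈ A, ∀ b ∈ B, G.Adj a b

open Finset in
lemma kst_core {V : Type*} [Fintype V] [DecidableEq V]
    (G : SimpleGraph V) [DecidableRel G.Adj] (ℓ : ℕ) (hℓ : 1 ≤ ℓ)
    (hfree : KllFree G ℓ) :
    ∑ v, (G.degree v).choose ℓ ≤ (ℓ - 1) * (Fintype.card V).choose ℓ := by
  classical
  have key : ∀ S ∈ (univ : Finset V).powersetCard ℓ,
      (univ.filter fun v => S ⊆ G.neighborFinset v).card ≤ ℓ - 1 := by
    intro S hS
    by_contra h
    push_neg at h
    have hle : ℓ ≤ (univ.filter fun v => S ⊆ G.neighborFinset v).card := by omega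
    obtain ⟨A, hAsub, hAcard⟩ := Finset.exists_subset_card_eq hle
    refine hfree ⟨A, S, ?_, hAcard, (Finset.mem_powersetCard.1 hS).2, ?_⟩
    · rw [Finset.disjoint_left]
      intro a ha haS
      have := (Finset.mem_filter.1 (hAsub ha)).2 haS
      exact G.irrefl ((G.mem_neighborFinset a a).1 this)
    · intro a ha b hb
      have := (Finset.mem_filter.1 (hAsub ha)).2 hb
      exact (G.mem_neighborFinset a b).1 this
  have swap : ∑ v, (G.degree v).choose ℓ =
      ∑ S ∈ (univ : Finset V).powersetCard ℓ,
        (univ.filter fun v => S ⊆ G.neighborFinset v).card := by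
    have hv : ∀ v : V, (G.degree v).choose ℓ =
        (((univ : Finset V).powersetCard ℓ).filter (fun S => S ⊆ G.neighborFinset v)).card := by
      intro v
      have hset : ((univ : Finset V).powersetCard ℓ).filter (fun S => S ⊆ G.neighborFinset v)
          = (G.neighborFinset v).powersetCard ℓ := by
        ext S
        simp [Finset.mem_powersetCard, Finset.mem_filter, and_comm]
      rw [hset, Finset.card_powersetCard, SimpleGraph.degree]
    calc ∑ v, (G.degree v).choose ℓ
        = ∑ v : V, ∑ S ∈ (univ : Finset V).powersetCard ℓ,
            (if S ⊆ G.neighborFinset v then 1 else 0) := by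
          refine Finset.sum_congr rfl fun v _ => ?_
          rw [hv v, Finset.card_filter]
      _ = ∑ S ∈ (univ : Finset V).powersetCard ℓ, ∑ v : V,
            (if S ⊆ G.neighborFinset v then 1 else 0) := Finset.sum_comm
      _ = ∑ S ∈ (univ : Finset V).powersetCard ℓ,
            (univ.filter fun v => S ⊆ G.neighborFinset v).card := by
          refine Finset.sum_congr rfl fun S _ => ?_
          rw [Finset.card_filter]
  rw [swap]
  calc ∑ S ∈ (univ : Finset V).powersetCard ℓ,
        (univ.filter fun v => S ⊆ G.neighborFinset v).card
      ≤ ∑ _S ∈ (univ : Finset V).powersetCard ℓ, (ℓ - 1) := Finset.sum_le_sum key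
    _ = (ℓ - 1) * (Fintype.card V).choose ℓ := by
        rw [Finset.sum_const, Finset.card_powersetCard, Finset.card_univ, smul_eq_mul, mul_comm]

theorem kovari_sos_turan {V : Type*} [Fintype V] [DecidableEq V]
    (G : SimpleGraph V) [DecidableRel G.Adj] (ℓ : ℕ) (hℓ : 1 ≤ ℓ)
    (hfree : KllFree G ℓ) :
    (G.edgeFinset.card : ℝ) ≤
      ((ℓ - 1 : ℝ) / 2) ^ ((1 : ℝ) / ℓ) * (Fintype.card V : ℝ) ^ (2 - (1 : ℝ) / ℓ)
        + (1 / 2 : ℝ) * (ℓ - 1) * Fintype.card V := by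
  classical
  obtain ⟨k, rfl⟩ : ∃ k, ℓ = k + 1 := ⟨ℓ - 1, by omega⟩
  set ℓ := k + 1 with hℓdef
  set n := Fintype.card V with hn
  have hkcast : ((ℓ : ℕ) : ℝ) - 1 = (k : ℝ) := by push_cast [hℓdef]; ring
  have hℓpos : (0:ℝ) < (ℓ:ℝ) := by positivity
  have hC : (0:ℝ) ≤ ((k:ℝ)/2) ^ ((1:ℝ)/ℓ) := Real.rpow_nonneg (by positivity) _
  have hn0 : (0:ℝ) ≤ (n:ℝ) ^ (2 - (1:ℝ)/ℓ) := Real.rpow_nonneg (Nat.cast_nonneg n) _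
  rw [hkcast]
  have hsum : ∑ v, G.degree v = 2 * G.edgeFinset.card :=
    G.sum_degrees_eq_twice_card_edges
  by_cases hcase : 2 * (G.edgeFinset.card : ℝ) ≤ (k:ℝ) * n
  · nlinarith [mul_nonneg hC hn0]
  push_neg at hcase
  set e : ℝ := (G.edgeFinset.card : ℝ) with he
  set S : ℝ := 2 * e - (k:ℝ) * n with hSdef
  have hSpos : 0 < S := by simp only [hSdef]; linarith
  have hnpos : 0 < n := by
    by_contra hcon
    have h0 : n = 0 := by omega
    have huniv : (Finset.univ : Finset V) = ∅ := by
      rw [← Finset.card_eq_zero, Finset.card_univ]; exact h0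
    have he0 : G.edgeFinset.card = 0 := by
      have h' := hsum
      rw [huniv, Finset.sum_empty] at h'
      omega
    simp only [he, he0, h0, Nat.cast_zero, mul_zero] at hcase
    norm_num at hcase
  set b : V → ℝ := fun v => ((G.degree v - k : ℕ) : ℝ) with hb
  have hbnn : ∀ v, 0 ≤ b v := fun v => Nat.cast_nonneg _
  have h1 : ∀ v, (G.degree v : ℝ) - (k:ℝ) ≤ b v := by
    intro v
    rcases le_total k (G.degree v) with h | h
    · simp only [hb]; rw [Nat.cast_sub h]
    · have : ((G.degree v : ℝ)) ≤ (k:ℝ) := by exact_mod_cast h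
      exact le_trans (by linarith) (hbnn v)
  have h3 : S ≤ ∑ v, b v := by
    have hsl : ∑ v, ((G.degree v : ℝ) - (k:ℝ)) ≤ ∑ v, b v :=
      Finset.sum_le_sum fun v _ => h1 v
    have hsum' : ∑ v, (G.degree v : ℝ) = 2 * e := by
      rw [he]; exact_mod_cast congrArg (Nat.cast : ℕ → ℝ) hsum
    rw [Finset.sum_sub_distrib, hsum', Finset.sum_const, Finset.card_univ,
      nsmul_eq_mul] at hsl
    rw [hSdef, hn]
    linarith
  have h2 : ∑ v, b v ^ ℓ ≤ (k:ℝ) * (n:ℝ) ^ ℓ := by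
    have hnat : ∑ v, (G.degree v - k) ^ ℓ ≤ k * n ^ ℓ := by
      calc ∑ v, (G.degree v - k) ^ ℓ
          ≤ ∑ v, (G.degree v).descFactorial ℓ := by
            refine Finset.sum_le_sum fun v _ => ?_
            have hveq : G.degree v - k = G.degree v + 1 - ℓ := by omega
            rw [hveq]
            exact Nat.pow_sub_le_descFactorial _ _
        _ = ∑ v, (Nat.factorial ℓ) * (G.degree v).choose ℓ := by
            simp_rw [Nat.descFactorial_eq_factorial_mul_choose]
        _ = (Nat.factorial ℓ) * ∑ v, (G.degree v).choose ℓ := by rw [Finset.mul_sum]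
        _ ≤ (Nat.factorial ℓ) * ((ℓ - 1) * n.choose ℓ) :=
            Nat.mul_le_mul_left _ (kst_core G ℓ (by omega) hfree)
        _ = (ℓ - 1) * ((Nat.factorial ℓ) * n.choose ℓ) := by ring
        _ = (ℓ - 1) * n.descFactorial ℓ := by
            rw [Nat.descFactorial_eq_factorial_mul_choose]
        _ ≤ (ℓ - 1) * n ^ ℓ := Nat.mul_le_mul_left _ (Nat.descFactorial_le_pow _ _)
        _ = k * n ^ ℓ := by rw [hℓdef, Nat.add_sub_cancel]
    have hcast : ∑ v, b v ^ ℓ = ((∑ v, (G.degree v - k) ^ ℓ : ℕ) : ℝ) := by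
      simp only [hb]; push_cast; rfl
    rw [hcast]
    calc ((∑ v, (G.degree v - k) ^ ℓ : ℕ) : ℝ) ≤ ((k * n ^ ℓ : ℕ) : ℝ) := by exact_mod_cast hnat
      _ = (k:ℝ) * (n:ℝ) ^ ℓ := by push_cast; ring
  have h4 : S ^ ℓ ≤ (k:ℝ) * (n:ℝ) ^ (2*ℓ - 1 : ℕ) := by
    have hpm := pow_sum_div_card_le_sum_pow (s := (Finset.univ : Finset V))
      (f := b) (fun i _ => hbnn i) k
    rw [Finset.card_univ, ← hn, div_le_iff₀ (by positivity)] at hpm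
    have hS' : S ^ ℓ ≤ (∑ v, b v) ^ ℓ := pow_le_pow_left₀ hSpos.le h3 ℓ
    have hexp : (n:ℝ) ^ ℓ * (n:ℝ) ^ k = (n:ℝ) ^ (2*ℓ - 1 : ℕ) := by
      rw [← pow_add]; congr 1; omega
    calc S ^ ℓ ≤ (∑ v, b v) ^ (k+1) := hS'
      _ ≤ (∑ v, b v ^ (k+1)) * (n:ℝ) ^ k := hpm
      _ ≤ (k:ℝ) * (n:ℝ) ^ ℓ * (n:ℝ) ^ k := by
          have hnk : (0:ℝ) ≤ (n:ℝ) ^ k := by positivity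
          exact mul_le_mul_of_nonneg_right h2 hnk
      _ = (k:ℝ) * (n:ℝ) ^ (2*ℓ - 1 : ℕ) := by rw [mul_assoc, hexp]
  have h6 : S ≤ ((k:ℝ) * (n:ℝ) ^ (2*ℓ - 1 : ℕ)) ^ ((1:ℝ)/ℓ) := by
    have hSeq : S = (S ^ (ℓ:ℕ)) ^ ((1:ℝ)/ℓ) := by
      rw [← Real.rpow_natCast S ℓ, ← Real.rpow_mul hSpos.le]
      rw [mul_one_div, div_self (ne_of_gt hℓpos), Real.rpow_one]
    rw [hSeq]
    exact Real.rpow_le_rpow (by positivity) h4 (by positivity)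
  have h7 : ((k:ℝ) * (n:ℝ) ^ (2*ℓ - 1 : ℕ)) ^ ((1:ℝ)/ℓ)
      = (k:ℝ) ^ ((1:ℝ)/ℓ) * (n:ℝ) ^ (2 - (1:ℝ)/ℓ) := by
    rw [Real.mul_rpow (Nat.cast_nonneg k) (by positivity)]
    congr 1
    rw [← Real.rpow_natCast (n:ℝ) (2*ℓ - 1), ← Real.rpow_mul (Nat.cast_nonneg n)]
    congr 1
    have h2l : ((2*ℓ - 1 : ℕ) : ℝ) = 2*(ℓ:ℝ) - 1 := by
      have : (1:ℕ) ≤ 2*ℓ := by omega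
      push_cast [this]; ring
    rw [h2l]
    field_simp
  have h8 : (k:ℝ) ^ ((1:ℝ)/ℓ) ≤ 2 * ((k:ℝ)/2) ^ ((1:ℝ)/ℓ) := by
    rw [Real.div_rpow (Nat.cast_nonneg k) (by norm_num : (0:ℝ) ≤ 2)]
    have h2r : (2:ℝ) ^ ((1:ℝ)/ℓ) ≤ 2 := by
      calc (2:ℝ) ^ ((1:ℝ)/ℓ) ≤ (2:ℝ) ^ (1:ℝ) := by
            apply Real.rpow_le_rpow_of_exponent_le one_le_two
            rw [div_le_one hℓpos]
            exact_mod_cast Nat.one_le_cast.2 (by omega : 1 ≤ ℓ)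
        _ = 2 := Real.rpow_one 2
    have h2pos : (0:ℝ) < (2:ℝ) ^ ((1:ℝ)/ℓ) := Real.rpow_pos_of_pos two_pos _
    rw [mul_div_assoc', le_div_iff₀ h2pos]
    nlinarith [Real.rpow_nonneg (Nat.cast_nonneg k : (0:ℝ) ≤ (k:ℝ)) ((1:ℝ)/ℓ)]
  rw [h7] at h6
  have h9 : S ≤ 2 * (((k:ℝ)/2) ^ ((1:ℝ)/ℓ) * (n:ℝ) ^ (2 - (1:ℝ)/ℓ)) := by
    calc S ≤ (k:ℝ) ^ ((1:ℝ)/ℓ) * (n:ℝ) ^ (2 - (1:ℝ)/ℓ) := h6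
      _ ≤ 2 * ((k:ℝ)/2) ^ ((1:ℝ)/ℓ) * (n:ℝ) ^ (2 - (1:ℝ)/ℓ) :=
          mul_le_mul_of_nonneg_right h8 hn0
      _ = 2 * (((k:ℝ)/2) ^ ((1:ℝ)/ℓ) * (n:ℝ) ^ (2 - (1:ℝ)/ℓ)) := by ring
  simp only [hSdef] at h9
  linarith
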